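/- In a triangulated category 𝓑 with strictly full additive subcategories 𝓑₀, 𝓑₁ satisfying: 𝓑 = 𝓑₀ ⊕ 𝓑₁, 𝓑₀[1] = 𝓑₁, 𝓑₁[1] = 𝓑₀, and Hom(𝓑₀, 𝓑₁) = 0, the subcategory 𝓑₀ is an abelian category in which the short exact sequences correspond to distinguished triangles (A, B, C) with all vertices in 𝓑₀. -/

import Mathlib

set_option linter.unusedSectionVars false

open CategoryTheory Limits Pretriangulated

section Stmt8Aux

variable {𝓑 : Type*} [Category 𝓑] [Preadditive 𝓑] [HasZeroObject 𝓑]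
    [HasBinaryBiproducts 𝓑] [HasShift 𝓑 ℤ] [∀ n : ℤ, (shiftFunctor 𝓑 n).Additive]
    [Pretriangulated 𝓑]

structure Stmt8Hyp (P₀ P₁ : 𝓑 → Prop) : Prop where
  h₀iso : ∀ X Y : 𝓑, (X ≅ Y) → P₀ X → P₀ Y
  h₁iso : ∀ X Y : 𝓑, (X ≅ Y) → P₁ X → P₁ Y
  h₀zero : ∀ X : 𝓑, IsZero X → P₀ X
  h₁zero : ∀ X : 𝓑, IsZero X → P₁ X
  h₀sum : ∀ X Y : 𝓑, P₀ X → P₀ Y → P₀ (X ⊞ Y)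
  h₁sum : ∀ X Y : 𝓑, P₁ X → P₁ Y → P₁ (X ⊞ Y)
  hdec : ∀ X : 𝓑, ∃ X₀ X₁ : 𝓑, P₀ X₀ ∧ P₁ X₁ ∧ Nonempty (X ≅ X₀ ⊞ X₁)
  hshift₀ : ∀ X : 𝓑, P₀ X → P₁ (X⟦(1 : ℤ)⟧)
  hshift₁ : ∀ X : 𝓑, P₁ X → P₀ (X⟦(1 : ℤ)⟧)
  hhom : ∀ (X Y : 𝓑) (f : X ⟶ Y), P₀ X → P₁ Y → f = 0

namespace Stmt8Hyp

variable {P₀ P₁ : 𝓑 → Prop} (S : Stmt8Hyp P₀ P₁)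
include S

lemma hom10 {X Y : 𝓑} (f : X ⟶ Y) (h1 : P₁ X) (h0 : P₀ Y) : f = 0 := by
  have h := S.hhom _ _ ((shiftFunctor 𝓑 (1 : ℤ)).map f) (S.hshift₁ X h1) (S.hshift₀ Y h0)
  exact (shiftFunctor 𝓑 (1 : ℤ)).map_injective (by rw [h, Functor.map_zero])

lemma p₁_of_shift {X : 𝓑} (h : P₀ (X⟦(1 : ℤ)⟧)) : P₁ X := by
  obtain ⟨X₀, X₁, h0, h1, ⟨e⟩⟩ := S.hdec X
  let F := shiftFunctor 𝓑 (1 : ℤ)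
  have hπ : F.map (e.hom ≫ biprod.fst) = 0 := S.hhom _ _ _ h (S.hshift₀ _ h0)
  have hz1 : 𝟙 (F.obj X₀) = 0 := by
    have h2 : F.map (biprod.inl ≫ e.inv) ≫ F.map (e.hom ≫ biprod.fst) = 𝟙 (F.obj X₀) := by
      rw [← F.map_comp, ← F.map_id]
      congr 1
      simp
    rw [← h2, hπ, comp_zero]
  have hz : IsZero X₀ := by
    rw [IsZero.iff_id_eq_zero]
    apply F.map_injective
    rw [CategoryTheory.Functor.map_id, CategoryTheory.Functor.map_zero]
    exact hz1
  exact S.h₁iso _ _ e.symm (S.h₁sum _ _ (S.h₁zero _ hz) h1)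

lemma p₀_of_shift {X : 𝓑} (h : P₁ (X⟦(1 : ℤ)⟧)) : P₀ X := by
  obtain ⟨X₀, X₁, h0, h1, ⟨e⟩⟩ := S.hdec X
  let F := shiftFunctor 𝓑 (1 : ℤ)
  have hπ : F.map (e.hom ≫ biprod.snd) = 0 := S.hom10 _ h (S.hshift₁ _ h1)
  have hz1 : 𝟙 (F.obj X₁) = 0 := by
    have h2 : F.map (biprod.inr ≫ e.inv) ≫ F.map (e.hom ≫ biprod.snd) = 𝟙 (F.obj X₁) := by
      rw [← F.map_comp, ← F.map_id]
      congr 1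
      simp
    rw [← h2, hπ, comp_zero]
  have hz : IsZero X₁ := by
    rw [IsZero.iff_id_eq_zero]
    apply F.map_injective
    rw [CategoryTheory.Functor.map_id, CategoryTheory.Functor.map_zero]
    exact hz1
  exact S.h₀iso _ _ e.symm (S.h₀sum _ _ h0 (S.h₀zero _ hz))

lemma p₁_neg {X : 𝓑} (h : P₀ X) : P₁ (X⟦(-1 : ℤ)⟧) :=
  S.p₁_of_shift (S.h₀iso _ _ (shiftNegShift X (1 : ℤ)).symm h)

lemma p₀_neg {X : 𝓑} (h : P₁ X) : P₀ (X⟦(-1 : ℤ)⟧) :=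
  S.p₀_of_shift (S.h₁iso _ _ (shiftNegShift X (1 : ℤ)).symm h)

lemma cok (T : Triangle 𝓑) (hT : T ∈ distTriang 𝓑) (h₁ : P₀ T.obj₁)
    {W : 𝓑} (hW : P₀ W) (g : T.obj₂ ⟶ W) (hg : T.mor₁ ≫ g = 0) :
    ∃! u : T.obj₃ ⟶ W, T.mor₂ ≫ u = g := by
  obtain ⟨u, hu⟩ := Triangle.yoneda_exact₂ T hT g hg
  refine ⟨u, hu.symm, fun v hv => ?_⟩
  have h0 : T.mor₂ ≫ (v - u) = 0 := by
    rw [Preadditive.comp_sub, hv, ← hu, sub_self]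
  obtain ⟨w, hw⟩ := Triangle.yoneda_exact₃ T hT _ h0
  have hw0 : w = 0 := S.hom10 w (S.hshift₀ _ h₁) hW
  rw [hw0, comp_zero] at hw
  exact sub_eq_zero.mp hw

lemma ker (T : Triangle 𝓑) (hT : T ∈ distTriang 𝓑) (h₃ : P₀ T.obj₃)
    {W : 𝓑} (hW : P₀ W) (g : W ⟶ T.obj₂) (hg : g ≫ T.mor₂ = 0) :
    ∃! u : W ⟶ T.obj₁, u ≫ T.mor₁ = g := by
  obtain ⟨u, hu⟩ := Triangle.coyoneda_exact₂ T hT g hg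
  refine ⟨u, hu.symm, fun v hv => ?_⟩
  have h0 : (v - u) ≫ T.mor₁ = 0 := by
    rw [Preadditive.sub_comp, hv, ← hu, sub_self]
  obtain ⟨w, hw⟩ := Triangle.coyoneda_exact₂ T.invRotate (inv_rot_of_distTriang T hT)
    (v - u) h0
  have hw0 : w = 0 := S.hhom _ _ w hW (S.p₁_neg h₃)
  rw [hw0, zero_comp] at hw
  exact sub_eq_zero.mp hw


lemma exists_cokernel {X Y : 𝓑} (f : X ⟶ Y) (hX : P₀ X) (hY : P₀ Y) :
    ∃ (Q : 𝓑) (_ : P₀ Q) (c : Y ⟶ Q), f ≫ c = 0 ∧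
      ∀ (W : 𝓑), P₀ W → ∀ g : Y ⟶ W, f ≫ g = 0 →
        ∃! u : Q ⟶ W, c ≫ u = g := by
  obtain ⟨Z, g, h, hT⟩ := Pretriangulated.distinguished_cocone_triangle f
  obtain ⟨Z₀, Z₁, hZ₀, hZ₁, ⟨e⟩⟩ := S.hdec Z
  have hfg : f ≫ g = 0 := comp_distTriang_mor_zero₁₂ _ hT
  refine ⟨Z₀, hZ₀, g ≫ e.hom ≫ biprod.fst, by rw [reassoc_of% hfg, zero_comp], ?_⟩
  intro W hW g' hg'
  obtain ⟨u', hu', huniq'⟩ := S.cok (Triangle.mk f g h) hT hX hW g' hg'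
  have hkey : ∀ v : Z ⟶ W, g ≫ v = g ≫ (e.hom ≫ biprod.fst) ≫ (biprod.inl ≫ e.inv) ≫ v := by
    intro v
    have htot : e.hom ≫ (biprod.fst ≫ biprod.inl + biprod.snd ≫ biprod.inr) ≫ e.inv = 𝟙 Z := by
      rw [biprod.total]; simp
    have hsnd : g ≫ e.hom ≫ biprod.snd = 0 := S.hhom _ _ _ hY hZ₁
    calc g ≫ v = g ≫ (e.hom ≫ (biprod.fst ≫ biprod.inl + biprod.snd ≫ biprod.inr) ≫ e.inv) ≫ v := by
          rw [htot, Category.id_comp]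
    _ = g ≫ (e.hom ≫ biprod.fst) ≫ (biprod.inl ≫ e.inv) ≫ v
          + (g ≫ e.hom ≫ biprod.snd) ≫ (biprod.inr ≫ e.inv) ≫ v := by
          simp only [Preadditive.add_comp, Preadditive.comp_add, Category.assoc]
    _ = g ≫ (e.hom ≫ biprod.fst) ≫ (biprod.inl ≫ e.inv) ≫ v := by
          rw [hsnd, zero_comp, add_zero]
  refine ⟨(biprod.inl ≫ e.inv) ≫ u', ?_, ?_⟩
  · have := (hkey u').symm.trans hu'
    simpa using this
  · intro u₂ hu₂
    have h2 : g ≫ (e.hom ≫ biprod.fst) ≫ u₂ = g' := by simpa using hu₂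
    have h3 : (e.hom ≫ biprod.fst) ≫ u₂ = u' := huniq' _ (by simp only [Category.assoc] at h2 ⊢; exact h2)
    calc u₂ = (biprod.inl ≫ e.inv) ≫ (e.hom ≫ biprod.fst) ≫ u₂ := by simp
    _ = (biprod.inl ≫ e.inv) ≫ u' := by rw [h3]

lemma exists_kernel {X Y : 𝓑} (f : X ⟶ Y) (hX : P₀ X) (hY : P₀ Y) :
    ∃ (K : 𝓑) (_ : P₀ K) (k : K ⟶ X), k ≫ f = 0 ∧
      ∀ (W : 𝓑), P₀ W → ∀ g : W ⟶ X, g ≫ f = 0 →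
        ∃! u : W ⟶ K, u ≫ k = g := by
  obtain ⟨Z, g, h, hT⟩ := Pretriangulated.distinguished_cocone_triangle f
  have hT' := inv_rot_of_distTriang _ hT
  set T' := (Triangle.mk f g h).invRotate with hT'def
  obtain ⟨K₀, K₁, hK₀, hK₁, ⟨e⟩⟩ := S.hdec (T'.obj₁)
  have hwf : T'.mor₁ ≫ f = 0 := comp_distTriang_mor_zero₁₂ _ hT'
  refine ⟨K₀, hK₀, (biprod.inl ≫ e.inv) ≫ T'.mor₁,
    (Category.assoc _ _ _).trans ((congrArg (fun k => (biprod.inl ≫ e.inv) ≫ k) hwf).trans comp_zero), ?_⟩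
  intro W hW g' hg'
  obtain ⟨u', hu', huniq'⟩ := S.ker T' hT' hY hW g' hg'
  have hkey : ∀ v : W ⟶ T'.obj₁, v ≫ T'.mor₁ = (v ≫ e.hom ≫ biprod.fst) ≫ (biprod.inl ≫ e.inv) ≫ T'.mor₁ := by
    intro v
    have htot : e.hom ≫ (biprod.fst ≫ biprod.inl + biprod.snd ≫ biprod.inr) ≫ e.inv = 𝟙 _ := by
      rw [biprod.total]; simp
    have hsnd : v ≫ e.hom ≫ biprod.snd = 0 := S.hhom _ _ _ hW hK₁
    calc v ≫ T'.mor₁ = v ≫ (e.hom ≫ (biprod.fst ≫ biprod.inl + biprod.snd ≫ biprod.inr) ≫ e.inv) ≫ T'.mor₁ := by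
          rw [htot, Category.id_comp]
    _ = (v ≫ e.hom ≫ biprod.fst) ≫ (biprod.inl ≫ e.inv) ≫ T'.mor₁
          + (v ≫ e.hom ≫ biprod.snd) ≫ (biprod.inr ≫ e.inv) ≫ T'.mor₁ := by
          simp only [Preadditive.add_comp, Preadditive.comp_add, Category.assoc]
    _ = (v ≫ e.hom ≫ biprod.fst) ≫ (biprod.inl ≫ e.inv) ≫ T'.mor₁ := by
          rw [hsnd, zero_comp, add_zero]
  refine ⟨u' ≫ e.hom ≫ biprod.fst, ?_, ?_⟩
  · exact (hkey u').symm.trans hu'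
  · intro u₂ hu₂
    have h2 : (u₂ ≫ biprod.inl ≫ e.inv) ≫ T'.mor₁ = g' := (Category.assoc _ _ _).trans hu₂
    have h3 : u₂ ≫ biprod.inl ≫ e.inv = u' := huniq' _ h2
    calc u₂ = (u₂ ≫ biprod.inl ≫ e.inv) ≫ e.hom ≫ biprod.fst := by simp
    _ = u' ≫ e.hom ≫ biprod.fst := by rw [h3]


lemma exists_normal_cokernel {X Y : 𝓑} (f : X ⟶ Y) (hX : P₀ X) (hY : P₀ Y)
    (hepi : ∀ (W : 𝓑), P₀ W → ∀ g : Y ⟶ W, f ≫ g = 0 → g = 0) :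
    ∃ (K : 𝓑) (_ : P₀ K) (k : K ⟶ X), k ≫ f = 0 ∧
      ∀ (W : 𝓑), P₀ W → ∀ g : X ⟶ W, k ≫ g = 0 →
        ∃! u : Y ⟶ W, f ≫ u = g := by
  obtain ⟨Z, g, h, hT⟩ := Pretriangulated.distinguished_cocone_triangle f
  obtain ⟨Z₀, Z₁, hZ₀, hZ₁, ⟨e⟩⟩ := S.hdec Z
  have hfg : f ≫ g = 0 := comp_distTriang_mor_zero₁₂ _ hT
  -- the 𝓑₀-component of Z is zero since f is an epimorphism relative to 𝓑₀
  have hπ0 : g ≫ e.hom ≫ biprod.fst = 0 :=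
    hepi Z₀ hZ₀ _ (by rw [reassoc_of% hfg, zero_comp])
  obtain ⟨v, hv⟩ := Triangle.yoneda_exact₃ (Triangle.mk f g h) hT (e.hom ≫ biprod.fst) hπ0
  have hv0 : v = 0 := S.hom10 v (S.hshift₀ X hX) hZ₀
  rw [hv0, comp_zero] at hv
  have hz1 : IsZero Z₀ := by
    rw [IsZero.iff_id_eq_zero]
    calc 𝟙 Z₀ = (biprod.inl ≫ e.inv) ≫ (e.hom ≫ biprod.fst) := by simp
    _ = 0 := (congrArg (fun k => (biprod.inl ≫ e.inv) ≫ k) hv).trans comp_zero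
  have hZP₁ : P₁ Z := S.h₁iso _ _ e.symm (S.h₁sum _ _ (S.h₁zero _ hz1) hZ₁)
  have hT' := inv_rot_of_distTriang _ hT
  set T' := (Triangle.mk f g h).invRotate with hT'def
  have hK : P₀ T'.obj₁ := S.p₀_neg hZP₁
  refine ⟨T'.obj₁, hK, T'.mor₁, comp_distTriang_mor_zero₁₂ _ hT', ?_⟩
  intro W hW g' hg'
  exact S.cok T' hT' hK hW g' hg'

lemma exists_normal_kernel {X Y : 𝓑} (f : X ⟶ Y) (hX : P₀ X) (hY : P₀ Y)
    (hmono : ∀ (W : 𝓑), P₀ W → ∀ g : W ⟶ X, g ≫ f = 0 → g = 0) :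
    ∃ (Q : 𝓑) (_ : P₀ Q) (c : Y ⟶ Q), f ≫ c = 0 ∧
      ∀ (W : 𝓑), P₀ W → ∀ g : W ⟶ Y, g ≫ c = 0 →
        ∃! u : W ⟶ X, u ≫ f = g := by
  obtain ⟨Z, g, h, hT⟩ := Pretriangulated.distinguished_cocone_triangle f
  have hT' := inv_rot_of_distTriang _ hT
  set T' := (Triangle.mk f g h).invRotate with hT'def
  have hT'' := inv_rot_of_distTriang _ hT'
  obtain ⟨K₀, K₁, hK₀, hK₁, ⟨e⟩⟩ := S.hdec (T'.obj₁)
  have hwf : T'.mor₁ ≫ f = 0 := comp_distTriang_mor_zero₁₂ _ hT'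
  have hk0 : ((biprod.inl ≫ e.inv) ≫ T'.mor₁) ≫ f = 0 := by
    exact (Category.assoc _ _ _).trans ((congrArg (fun k => (biprod.inl ≫ e.inv) ≫ k) hwf).trans comp_zero)
  have hk : (biprod.inl ≫ e.inv) ≫ T'.mor₁ = 0 :=
    hmono _ hK₀ _ hk0
  -- conclude that the 𝓑₀-component K₀ of Z⟦-1⟧ vanishes
  obtain ⟨v, hv⟩ := Triangle.coyoneda_exact₂ T'.invRotate hT'' (biprod.inl ≫ e.inv) hk
  have hv0 : v = 0 := S.hhom _ _ v hK₀ (S.p₁_neg hY)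
  rw [hv0, zero_comp] at hv
  have hz1 : IsZero K₀ := by
    rw [IsZero.iff_id_eq_zero]
    calc 𝟙 K₀ = (biprod.inl ≫ e.inv) ≫ (e.hom ≫ biprod.fst) := by simp
    _ = 0 := (congrArg (fun k => k ≫ (e.hom ≫ biprod.fst)) hv).trans zero_comp
  have hK : P₁ T'.obj₁ := S.h₁iso _ _ e.symm (S.h₁sum _ _ (S.h₁zero _ hz1) hK₁)
  have hZ : P₀ Z := S.h₀iso _ _ (shiftNegShift Z (1 : ℤ)) (S.hshift₁ _ hK)
  refine ⟨Z, hZ, g, comp_distTriang_mor_zero₁₂ _ hT, ?_⟩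
  intro W hW g' hg'
  exact S.ker (Triangle.mk f g h) hT hZ hW g' hg'


lemma hasZeroObject' : HasZeroObject (ObjectProperty.FullSubcategory P₀) := by
  obtain ⟨Z, hZ⟩ := HasZeroObject.zero (C := 𝓑)
  refine ⟨⟨Z, S.h₀zero _ hZ⟩, ?_⟩
  rw [IsZero.iff_id_eq_zero]
  exact ObjectProperty.hom_ext _ (hZ.eq_of_src _ _)

lemma hasBinaryBiproducts' : HasBinaryBiproducts (ObjectProperty.FullSubcategory P₀) := by
  refine ⟨fun P Q => ?_⟩
  exact hasBinaryBiproduct_of_total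
    { pt := ⟨P.obj ⊞ Q.obj, S.h₀sum _ _ P.2 Q.2⟩
      fst := ObjectProperty.homMk (biprod.fst : P.obj ⊞ Q.obj ⟶ P.obj)
      snd := ObjectProperty.homMk (biprod.snd : P.obj ⊞ Q.obj ⟶ Q.obj)
      inl := ObjectProperty.homMk (biprod.inl : P.obj ⟶ P.obj ⊞ Q.obj)
      inr := ObjectProperty.homMk (biprod.inr : Q.obj ⟶ P.obj ⊞ Q.obj)
      inl_fst := ObjectProperty.hom_ext _ biprod.inl_fst
      inl_snd := ObjectProperty.hom_ext _ biprod.inl_snd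
      inr_fst := ObjectProperty.hom_ext _ biprod.inr_fst
      inr_snd := ObjectProperty.hom_ext _ biprod.inr_snd } (ObjectProperty.hom_ext _ biprod.total)

lemma hasKernels' : HasKernels (ObjectProperty.FullSubcategory P₀) := by
  constructor
  intro P Q f
  obtain ⟨K, hK, k, hk, huniv⟩ := S.exists_kernel f.hom P.2 Q.2
  have hk' : (ObjectProperty.homMk k : (⟨K, hK⟩ : ObjectProperty.FullSubcategory P₀) ⟶ P) ≫ f = 0 :=
    ObjectProperty.hom_ext _ hk
  refine HasLimit.mk ⟨KernelFork.ofι _ hk', ?_⟩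
  refine KernelFork.IsLimit.ofι _ _ ?_ ?_ ?_
  · intro W g' hg'
    exact ObjectProperty.homMk (huniv W.obj W.2 g'.hom (congrArg (fun m => m.hom) hg')).choose
  · intro W g' hg'
    exact ObjectProperty.hom_ext _ (huniv W.obj W.2 g'.hom (congrArg (fun m => m.hom) hg')).choose_spec.1
  · intro W g' hg' m hm
    exact ObjectProperty.hom_ext _ ((huniv W.obj W.2 g'.hom (congrArg (fun m => m.hom) hg')).choose_spec.2
      m.hom (congrArg (fun m => m.hom) hm))

lemma hasCokernels' : HasCokernels (ObjectProperty.FullSubcategory P₀) := by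
  constructor
  intro P Q f
  obtain ⟨Cq, hCq, c, hc, huniv⟩ := S.exists_cokernel f.hom P.2 Q.2
  have hc' : f ≫ (ObjectProperty.homMk c : Q ⟶ (⟨Cq, hCq⟩ : ObjectProperty.FullSubcategory P₀)) = 0 :=
    ObjectProperty.hom_ext _ hc
  refine HasColimit.mk ⟨CokernelCofork.ofπ _ hc', ?_⟩
  refine CokernelCofork.IsColimit.ofπ _ _ ?_ ?_ ?_
  · intro W g' hg'
    exact ObjectProperty.homMk (huniv W.obj W.2 g'.hom (congrArg (fun m => m.hom) hg')).choose
  · intro W g' hg'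
    exact ObjectProperty.hom_ext _ (huniv W.obj W.2 g'.hom (congrArg (fun m => m.hom) hg')).choose_spec.1
  · intro W g' hg' m hm
    exact ObjectProperty.hom_ext _ ((huniv W.obj W.2 g'.hom (congrArg (fun m => m.hom) hg')).choose_spec.2
      m.hom (congrArg (fun m => m.hom) hm))

lemma normalMonoCat (S' : Stmt8Hyp P₀ P₁) :
    IsNormalMonoCategory (ObjectProperty.FullSubcategory P₀) := by
  refine ⟨?_⟩
  intro P Q f hf
  have hmono : ∀ (W : 𝓑), P₀ W → ∀ g : W ⟶ P.obj, g ≫ f.hom = 0 → g = 0 := by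
    intro W hW g hg
    have h2 : (ObjectProperty.homMk g : (⟨W, hW⟩ : ObjectProperty.FullSubcategory P₀) ⟶ P) ≫ f
        = 0 ≫ f := by
      rw [zero_comp]; exact ObjectProperty.hom_ext _ hg
    exact congrArg (fun m => m.hom) (hf.right_cancellation _ _ h2)
  have hex := S'.exists_normal_kernel f.hom P.2 Q.2 hmono
  have hCq : P₀ hex.choose := hex.choose_spec.choose
  have huniv := hex.choose_spec.choose_spec.choose_spec.2
  have hc' : f ≫ (ObjectProperty.homMk hex.choose_spec.choose_spec.choose :
      Q ⟶ (⟨hex.choose, hCq⟩ : ObjectProperty.FullSubcategory P₀)) = 0 :=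
    ObjectProperty.hom_ext _ hex.choose_spec.choose_spec.choose_spec.1
  refine ⟨
    { Z := ⟨hex.choose, hCq⟩
      g := ObjectProperty.homMk hex.choose_spec.choose_spec.choose
      w := hc'
      isLimit := ?_ }⟩
  refine KernelFork.IsLimit.ofι _ _ ?_ ?_ ?_
  · intro W g' hg'
    exact ObjectProperty.homMk (huniv W.obj W.2 g'.hom (congrArg (fun m => m.hom) hg')).choose
  · intro W g' hg'
    exact ObjectProperty.hom_ext _ (huniv W.obj W.2 g'.hom (congrArg (fun m => m.hom) hg')).choose_spec.1
  · intro W g' hg' m hm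
    exact ObjectProperty.hom_ext _ ((huniv W.obj W.2 g'.hom (congrArg (fun m => m.hom) hg')).choose_spec.2
      m.hom (congrArg (fun m => m.hom) hm))

lemma normalEpiCat (S' : Stmt8Hyp P₀ P₁) :
    IsNormalEpiCategory (ObjectProperty.FullSubcategory P₀) := by
  refine ⟨?_⟩
  intro P Q f hf
  have hepi : ∀ (W : 𝓑), P₀ W → ∀ g : Q.obj ⟶ W,
      @CategoryStruct.comp 𝓑 _ P.obj Q.obj W f.hom g = 0 → g = 0 := by
    intro W hW g hg
    have h2 : f ≫ (ObjectProperty.homMk g : Q ⟶ (⟨W, hW⟩ : ObjectProperty.FullSubcategory P₀))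
        = f ≫ 0 := by
      rw [comp_zero]; exact ObjectProperty.hom_ext _ hg
    exact congrArg (fun m => m.hom) (hf.left_cancellation _ _ h2)
  have hex := S'.exists_normal_cokernel f.hom P.2 Q.2 hepi
  have hK : P₀ hex.choose := hex.choose_spec.choose
  have huniv := hex.choose_spec.choose_spec.choose_spec.2
  have hk' : (ObjectProperty.homMk hex.choose_spec.choose_spec.choose :
      (⟨hex.choose, hK⟩ : ObjectProperty.FullSubcategory P₀) ⟶ P) ≫ f = 0 :=
    ObjectProperty.hom_ext _ hex.choose_spec.choose_spec.choose_spec.1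
  refine ⟨
    { W := ⟨hex.choose, hK⟩
      g := ObjectProperty.homMk hex.choose_spec.choose_spec.choose
      w := hk'
      isColimit := ?_ }⟩
  refine CokernelCofork.IsColimit.ofπ _ _ ?_ ?_ ?_
  · intro W g' hg'
    exact ObjectProperty.homMk (huniv W.obj W.2 g'.hom (congrArg (fun m => m.hom) hg')).choose
  · intro W g' hg'
    exact ObjectProperty.hom_ext _ (huniv W.obj W.2 g'.hom (congrArg (fun m => m.hom) hg')).choose_spec.1
  · intro W g' hg' m hm
    exact ObjectProperty.hom_ext _ ((huniv W.obj W.2 g'.hom (congrArg (fun m => m.hom) hg')).choose_spec.2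
      m.hom (congrArg (fun m => m.hom) hm))

noncomputable def abelian (S' : Stmt8Hyp P₀ P₁) : Abelian (ObjectProperty.FullSubcategory P₀) := by
  haveI := S'.hasZeroObject'
  haveI := S'.hasBinaryBiproducts'
  haveI : HasFiniteProducts (ObjectProperty.FullSubcategory P₀) :=
    hasFiniteProducts_of_has_binary_and_terminal
  haveI := S'.hasKernels'
  haveI := S'.hasCokernels'
  haveI := S'.normalMonoCat S'
  haveI := S'.normalEpiCat S'
  exact
    { toPreadditive := inferInstance
      toIsNormalMonoCategory := inferInstance
      toIsNormalEpiCategory := inferInstance }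

end Stmt8Hyp

end Stmt8Aux


/-- In a triangulated category `𝓑` with strictly full additive subcategories
`𝓑₀`, `𝓑₁` satisfying `𝓑 = 𝓑₀ ⊕ 𝓑₁`, `𝓑₀[1] = 𝓑₁`, `𝓑₁[1] = 𝓑₀` and
`Hom(𝓑₀, 𝓑₁) = 0`, the subcategory `𝓑₀` is abelian, and distinguished
triangles with all vertices in `𝓑₀` yield short exact sequences in `𝓑₀`:
the first morphism is a kernel of the second, and the second a cokernel of the
first, relative to test objects in `𝓑₀`. -/
theorem stmt_8 (𝓑 : Type*) [Category 𝓑] [Preadditive 𝓑] [HasZeroObject 𝓑]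
    [HasBinaryBiproducts 𝓑] [HasShift 𝓑 ℤ] [∀ n : ℤ, (shiftFunctor 𝓑 n).Additive]
    [Pretriangulated 𝓑] [IsTriangulated 𝓑]
    (P₀ P₁ : 𝓑 → Prop)
    -- strictly full additive subcategories
    (h₀iso : ∀ X Y : 𝓑, (X ≅ Y) → P₀ X → P₀ Y)
    (h₁iso : ∀ X Y : 𝓑, (X ≅ Y) → P₁ X → P₁ Y)
    (h₀zero : ∀ X : 𝓑, Limits.IsZero X → P₀ X)
    (h₁zero : ∀ X : 𝓑, Limits.IsZero X → P₁ X)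
    (h₀sum : ∀ X Y : 𝓑, P₀ X → P₀ Y → P₀ (X ⊞ Y))
    (h₁sum : ∀ X Y : 𝓑, P₁ X → P₁ Y → P₁ (X ⊞ Y))
    -- (1) every object decomposes as a biproduct of objects of 𝓑₀ and 𝓑₁
    (hdec : ∀ X : 𝓑, ∃ (X₀ X₁ : 𝓑), P₀ X₀ ∧ P₁ X₁ ∧ Nonempty (X ≅ X₀ ⊞ X₁))
    -- (2) and (3): the shift interchanges 𝓑₀ and 𝓑₁
    (hshift₀ : ∀ X : 𝓑, P₀ X → P₁ (X⟦(1 : ℤ)⟧))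
    (hshift₁ : ∀ X : 𝓑, P₁ X → P₀ (X⟦(1 : ℤ)⟧))
    -- (4) no nonzero morphisms from 𝓑₀ to 𝓑₁
    (hhom : ∀ (X Y : 𝓑) (f : X ⟶ Y), P₀ X → P₁ Y → f = 0) :
    Nonempty (Abelian (ObjectProperty.FullSubcategory fun X : 𝓑 => P₀ X)) ∧
      ∀ (T : Triangle 𝓑), (T ∈ distTriang 𝓑) →
        P₀ T.obj₁ → P₀ T.obj₂ → P₀ T.obj₃ →
        (∀ W : 𝓑, P₀ W → ∀ g : W ⟶ T.obj₂, g ≫ T.mor₂ = 0 →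
            ∃! u : W ⟶ T.obj₁, u ≫ T.mor₁ = g) ∧
          (∀ W : 𝓑, P₀ W → ∀ g : T.obj₂ ⟶ W, T.mor₁ ≫ g = 0 →
            ∃! u : T.obj₃ ⟶ W, T.mor₂ ≫ u = g) := by
  have S : Stmt8Hyp P₀ P₁ :=
    ⟨h₀iso, h₁iso, h₀zero, h₁zero, h₀sum, h₁sum, hdec, hshift₀, hshift₁, hhom⟩
  refine ⟨⟨S.abelian⟩, ?_⟩
  intro T hT h₁ h₂ h₃
  exact ⟨fun W hW g hg => S.ker T hT h₃ hW g hg,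
    fun W hW g hg => S.cok T hT h₁ hW g hg⟩
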